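/- The cyclic Burrows–Wheeler Transform of S_σ equals the string (σ−1)·(0011⋯(σ−1)(σ−1))^{σ−1}·0011⋯(σ−3)(σ−3)(σ−2)(σ−1)(σ−2), where (0011⋯(σ−1)(σ−1)) denotes the string in which each symbol 0,…,σ−1 appears twice in increasing order. -/

import Mathlib

open List

/-- Block for symbol `a`: pairs (a,0)(a,1)⋯(a,σ-1) followed by a repeat of (a,σ-1). -/
def block (σ a : ℕ) : List ℕ :=
  ((List.range σ).flatMap fun b => [a, b]) ++ [a, σ - 1]

/-- The string S_σ: blocks for a = 0,…,σ-2 followed by the pair (σ-1,σ-1). -/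
def Sstr (σ : ℕ) : List ℕ :=
  ((List.range (σ - 1)).flatMap fun a => block σ a) ++ [σ - 1, σ - 1]

/-- Rotation of `S` by offset `i`. -/
def rot (S : List ℕ) (i : ℕ) : List ℕ := S.drop i ++ S.take i

/-- Cyclic k-gram of `S` starting at position `i` (indices mod `S.length`). -/
def cyc (S : List ℕ) (i k : ℕ) : List ℕ :=
  (List.range k).map fun j => S.getD ((i + j) % S.length) 0

/-- Number of cyclic occurrences of `u` in `S`. -/
def cOcc (S u : List ℕ) : ℕ :=
  ((List.range S.length).filter fun i => cyc S i u.length = u).length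

/-- `u` occurs as a cyclic substring of `S`. -/
def cOccurs (S u : List ℕ) : Prop := 0 < cOcc S u

/-- Number of runs (maximal blocks of equal symbols) of a list. -/
def runsCount (l : List ℕ) : ℕ := (l.destutter (· ≠ ·)).length

/-- Cyclic Burrows–Wheeler transform: sort all rotations lexicographically,
read the last column. -/
def cBWT (S : List ℕ) : List ℕ :=
  (((List.range S.length).map fun i => rot S i).insertionSort (· ≤ ·)).map
    fun ρ => ρ.getD (S.length - 1) 0

/-- Terminated string `t$`: symbols shifted by +1 and sentinel `0 = $` appended,
so the sentinel is strictly smaller than all alphabet symbols. -/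
def term (t : List ℕ) : List ℕ := (t.map (· + 1)) ++ [0]

/-- BWT of the terminated string `t$`: last column of the sorted rotation matrix. -/
def bwt (t : List ℕ) : List ℕ :=
  (((List.range (term t).length).map fun i => rot (term t) i).insertionSort (· ≤ ·)).map
    fun ρ => ρ.getD ((term t).length - 1) 0

/-- `x` is right-maximal in `w`: two distinct right extensions of `x` occur in `w`. -/
def RightMaximal (w x : List ℕ) : Prop :=
  ∃ a b : ℕ, a ≠ b ∧ (x ++ [a]) <:+: w ∧ (x ++ [b]) <:+: w

/-- The set of right-extensions of `w`. -/
def ExtSet (w : List ℕ) : Set (List ℕ) :=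
  {y | ∃ x a, RightMaximal w x ∧ y = x ++ [a] ∧ y <:+: w}

/-- Super-maximal right-extensions: right-extensions that are not a proper suffix
of another right-extension. -/
def SuperMax (w : List ℕ) : Set (List ℕ) :=
  {y ∈ ExtSet w | ∀ z ∈ ExtSet w, y <:+ z → y = z}

/-- χ: size of a smallest suffixient set = number of super-maximal right-extensions. -/
noncomputable def chi (w : List ℕ) : ℕ := (SuperMax w).ncard

/-- The regular cBWT block: each of 0,…,σ-1 twice in increasing order. -/
def patBlock (σ : ℕ) : List ℕ := (List.range σ).flatMap fun c => [c, c]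

/-- The final irregular cBWT block: each of 0,…,σ-3 twice, then σ-2, σ-1, σ-2. -/
def patFinal (σ : ℕ) : List ℕ :=
  ((List.range (σ - 2)).flatMap fun c => [c, c]) ++ [σ - 2, σ - 1, σ - 2]

/-- The canonical cBWT pattern: (σ-1) · (regular block)^m · final block. -/
def pattern (σ m : ℕ) : List ℕ :=
  [σ - 1] ++ (List.replicate m (patBlock σ)).flatten ++ patFinal σ

/-- `S` is 2-branching at order `k` over alphabet {0,…,σ-1}: every (k-1)-gram
occurs and its set of k-gram extensions is {u[0], (u[0]+1) mod σ}. -/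
def TwoBranching (σ k : ℕ) (S : List ℕ) : Prop :=
  ∀ u : List ℕ, u.length = k - 1 → (∀ x ∈ u, x < σ) →
    cOccurs S u ∧ ∀ c, c < σ →
      (cOccurs S (u ++ [c]) ↔ c = u.headD 0 ∨ c = (u.headD 0 + 1) % σ)


/-! Infrastructure -/

lemma length_flatMap_range (f : ℕ → List ℕ) (L m : ℕ) (hf : ∀ i, (f i).length = L) :
    ((List.range m).flatMap f).length = m * L := by
  induction m with
  | zero => simp
  | succ m ih =>
    rw [List.range_succ, List.flatMap_append, List.length_append, ih]
    simp [hf, Nat.succ_mul]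

lemma getD_flatMap_range (f : ℕ → List ℕ) (L m a r : ℕ) (hf : ∀ i, (f i).length = L)
    (ha : a < m) (hr : r < L) :
    ((List.range m).flatMap f).getD (a * L + r) 0 = (f a).getD r 0 := by
  induction m with
  | zero => omega
  | succ m ih =>
    rw [List.range_succ, List.flatMap_append]
    rcases Nat.lt_or_ge a m with h | h
    · rw [List.getD_append _ _ _ _ ?_, ih h]
      rw [length_flatMap_range f L m hf]
      have h3 : (a+1) * L ≤ m * L := Nat.mul_le_mul_right _ (by omega)
      have h4 : (a+1)*L = a*L + L := by ring
      omega
    · have haa : a = m := by omega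
      subst haa
      rw [List.getD_append_right _ _ _ _ ?_, length_flatMap_range f L a hf]
      · simp
      · rw [length_flatMap_range f L a hf]; omega

lemma length_block (σ a : ℕ) : (block σ a).length = 2 * σ + 2 := by
  rw [block, List.length_append, length_flatMap_range (fun b => [a, b]) 2 σ (fun i => rfl)]
  simp; ring

lemma length_Sstr (σ : ℕ) (hσ : 3 ≤ σ) : (Sstr σ).length = 2 * σ ^ 2 := by
  obtain ⟨d, rfl⟩ : ∃ d, σ = 3 + d := ⟨σ - 3, by omega⟩
  rw [Sstr, List.length_append,
    length_flatMap_range _ (2 * (3+d) + 2) ((3+d) - 1) (fun i => length_block (3+d) i)]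
  have e2 : (3+d-1) * (2*(3+d)+2) = 2*d^2 + 12*d + 16 := by
    have e1 : 3 + d - 1 = d + 2 := by omega
    rw [e1]; ring
  have e3 : 2*(3+d)^2 = 2*d^2 + 12*d + 18 := by ring
  simp only [List.length_cons, List.length_nil]
  omega

lemma block_getD (σ a r : ℕ) (hσ : 3 ≤ σ) (hr : r < 2 * σ + 2) :
    (block σ a).getD r 0 = if r % 2 = 0 then a else min (r / 2) (σ - 1) := by
  rw [block]
  have hlen : ((List.range σ).flatMap fun b => [a, b]).length = σ * 2 :=
    length_flatMap_range (fun b => [a, b]) 2 σ (fun i => rfl)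
  rcases Nat.lt_or_ge r (2 * σ) with h | h
  · rw [List.getD_append _ _ _ _ (by omega)]
    rcases Nat.even_or_odd r with ⟨b, hb⟩ | ⟨b, hb⟩
    · have hb' : r = b * 2 + 0 := by omega
      rw [hb', getD_flatMap_range (fun b => [a, b]) 2 σ b 0 (fun i => rfl) (by omega) (by omega)]
      have : (b * 2 + 0) % 2 = 0 := by omega
      simp [this]
    · have hb' : r = b * 2 + 1 := by omega
      rw [hb', getD_flatMap_range (fun b => [a, b]) 2 σ b 1 (fun i => rfl) (by omega) (by omega)]
      have h1 : (b * 2 + 1) % 2 = 1 := by omega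
      have h2 : (b * 2 + 1) / 2 = b := by omega
      simp [h1, h2]
      omega
  · rw [List.getD_append_right _ _ _ _ (by omega), hlen]
    have : r = 2*σ ∨ r = 2*σ+1 := by omega
    rcases this with h2 | h2 <;> subst h2
    · have e : 2*σ - σ*2 = 0 := by omega
      have e2 : (2*σ) % 2 = 0 := by omega
      simp [e, e2]
    · have e : 2*σ+1 - σ*2 = 1 := by omega
      have e2 : (2*σ+1) % 2 = 1 := by omega
      have e3 : (2*σ+1)/2 = σ := by omega
      simp [e, e2, e3]


lemma Sval (σ a r : ℕ) (hσ : 3 ≤ σ) (ha : a < σ - 1) (hr : r < 2 * σ + 2) :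
    (Sstr σ).getD (a * (2 * σ + 2) + r) 0 = if r % 2 = 0 then a else min (r / 2) (σ - 1) := by
  rw [Sstr, List.getD_append _ _ _ _ ?hlen,
    getD_flatMap_range _ (2*σ+2) (σ-1) a r (fun i => length_block σ i) ha hr,
    block_getD σ a r hσ hr]
  case hlen =>
    rw [length_flatMap_range _ (2*σ+2) (σ-1) (fun i => length_block σ i)]
    have h1 : a + 1 ≤ σ - 1 := by omega
    have h2 : (a+1) * (2*σ+2) ≤ (σ-1) * (2*σ+2) := Nat.mul_le_mul_right _ h1
    have h3 : (a+1) * (2*σ+2) = a * (2*σ+2) + (2*σ+2) := by ring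
    omega

lemma flatlen (σ : ℕ) (hσ : 3 ≤ σ) :
    ((List.range (σ-1)).flatMap fun a => block σ a).length = 2 * σ^2 - 2 := by
  rw [length_flatMap_range _ (2*σ+2) (σ-1) (fun i => length_block σ i)]
  obtain ⟨d, rfl⟩ : ∃ d, σ = 3 + d := ⟨σ - 3, by omega⟩
  have e2 : (3+d-1) * (2*(3+d)+2) = 2*d^2 + 12*d + 16 := by
    have e1 : 3 + d - 1 = d + 2 := by omega
    rw [e1]; ring
  have e3 : 2*(3+d)^2 = 2*d^2 + 12*d + 18 := by ring
  omega

lemma Sval_last (σ : ℕ) (hσ : 3 ≤ σ) :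
    (Sstr σ).getD (2 * σ ^ 2 - 2) 0 = σ - 1 ∧ (Sstr σ).getD (2 * σ ^ 2 - 1) 0 = σ - 1 := by
  have hl := flatlen σ hσ
  have h9 : 9 ≤ σ^2 := by nlinarith
  constructor
  · rw [Sstr, List.getD_append_right _ _ _ _ (by omega), hl]
    have : 2*σ^2-2 - (2*σ^2-2) = 0 := by omega
    rw [this]; rfl
  · rw [Sstr, List.getD_append_right _ _ _ _ (by omega), hl]
    have : 2*σ^2-1 - (2*σ^2-2) = 1 := by omega
    rw [this]; rfl


lemma rot_eq_map (S : List ℕ) (i : ℕ) (hi : i ≤ S.length) :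
    rot S i = (List.range S.length).map fun s => S.getD ((i + s) % S.length) 0 := by
  have hn : 0 < S.length ∨ S.length = 0 := by omega
  rcases hn with hn | hn
  swap
  · have : S = [] := List.length_eq_zero_iff.mp hn
    subst this; simp [rot]
  apply List.ext_getElem
  · simp [rot]; omega
  · intro k h1 h2
    simp only [rot, List.length_append, List.length_drop, List.length_take] at h1
    have hk : k < S.length := by omega
    rw [List.getElem_map, List.getElem_range]
    simp only [rot]
    rcases Nat.lt_or_ge k (S.length - i) with h | h
    · rw [List.getElem_append_left (by simp; omega)]
      rw [List.getElem_drop]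
      have : (i + k) % S.length = i + k := Nat.mod_eq_of_lt (by omega)
      rw [this, List.getD_eq_getElem S 0 (by omega)]
    · rw [List.getElem_append_right (by simp; omega)]
      simp only [List.length_drop]
      rw [List.getElem_take]
      have : (i + k) % S.length = k - (S.length - i) := by
        have h2 : i + k = (k - (S.length - i)) + S.length := by omega
        rw [h2, Nat.add_mod_right, Nat.mod_eq_of_lt (by omega)]
      rw [this, List.getD_eq_getElem S 0 (by omega)]

lemma length_rot (S : List ℕ) (i : ℕ) : (rot S i).length = S.length := by
  simp [rot]; omega

lemma rot_getD (S : List ℕ) (i k : ℕ) (hi : i ≤ S.length) (hk : k < S.length) :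
    (rot S i).getD k 0 = S.getD ((i + k) % S.length) 0 := by
  rw [rot_eq_map S i hi, List.getD_eq_getElem _ 0 (by simp [hk]), List.getElem_map,
    List.getElem_range]

lemma lex_append (p u v : List ℕ) (x y : ℕ) (h : x < y) :
    (p ++ x :: u) < (p ++ y :: v) := by
  show List.Lex (· < ·) _ _
  induction p with
  | nil => exact List.Lex.rel h
  | cons a p ih => exact List.Lex.cons ih

lemma lt_of_take_getD (u v : List ℕ) (t : ℕ) (h1 : t < u.length) (h2 : t < v.length)
    (hteq : u.take t = v.take t) (hlt : u.getD t 0 < v.getD t 0) : u < v := by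
  have hu : u = u.take t ++ u[t] :: u.drop (t + 1) := by
    have h := List.take_append_drop t u
    rw [List.drop_eq_getElem_cons h1] at h
    exact h.symm
  have hv : v = v.take t ++ v[t] :: v.drop (t + 1) := by
    have h := List.take_append_drop t v
    rw [List.drop_eq_getElem_cons h2] at h
    exact h.symm
  rw [List.getD_eq_getElem u 0 h1, List.getD_eq_getElem v 0 h2] at hlt
  calc u = u.take t ++ u[t] :: u.drop (t + 1) := hu
    _ < v.take t ++ v[t] :: v.drop (t + 1) := by
        rw [← hteq]; exact lex_append _ _ _ _ _ hlt
    _ = v := hv.symm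

lemma rot_lt_rot (S : List ℕ) (i j t : ℕ) (hi : i ≤ S.length) (hj : j ≤ S.length)
    (ht : t < S.length)
    (heq : ∀ s, s < t → S.getD ((i + s) % S.length) 0 = S.getD ((j + s) % S.length) 0)
    (hlt : S.getD ((i + t) % S.length) 0 < S.getD ((j + t) % S.length) 0) :
    rot S i < rot S j := by
  apply lt_of_take_getD _ _ t (by rw [length_rot]; omega) (by rw [length_rot]; omega)
  · apply List.ext_getElem (by simp [length_rot])
    intro s hs1 hs2
    rw [List.getElem_take, List.getElem_take]
    have hs : s < t := by
      simp only [List.length_take, length_rot] at hs1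
      omega
    have e1 : (rot S i)[s]'(by rw [length_rot]; omega) = (rot S i).getD s 0 :=
      (List.getD_eq_getElem _ 0 (by rw [length_rot]; omega)).symm
    have e2 : (rot S j)[s]'(by rw [length_rot]; omega) = (rot S j).getD s 0 :=
      (List.getD_eq_getElem _ 0 (by rw [length_rot]; omega)).symm
    rw [e1, e2, rot_getD S i s hi (by omega), rot_getD S j s hj (by omega)]
    exact heq s hs
  · rw [rot_getD S i t hi ht, rot_getD S j t hj ht]
    exact hlt


section part3
variable {R : ℕ → ℕ → Prop}

def gC (σ c : ℕ) : List ℕ :=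
  ((List.range (σ - 1)).flatMap fun k => [c * (2*σ+2) + 2*k, k * (2*σ+2) + (2*c+1)]) ++
    [c * (2*σ+2) + (2*σ-2), c * (2*σ+2) + 2*σ]

def gL (σ : ℕ) : List ℕ :=
  [2*σ^2 - 1] ++
    ((List.range (σ - 2)).flatMap fun a => [a * (2*σ+2) + (2*σ-1), a * (2*σ+2) + (2*σ+1)]) ++
    [2*σ^2 - 5, 2*σ^2 - 2, 2*σ^2 - 3]

def sIdx (σ : ℕ) : List ℕ := ((List.range (σ - 1)).flatMap fun c => gC σ c) ++ gL σ

lemma head?_flatMap_range (f : ℕ → List ℕ) (m : ℕ) (hd : ℕ → ℕ)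
    (hhd : ∀ c < m, (f c).head? = some (hd c)) (hm : 0 < m) :
    ((List.range m).flatMap f).head? = some (hd 0) := by
  obtain ⟨m', rfl⟩ : ∃ m', m = m' + 1 := ⟨m - 1, by omega⟩
  rw [List.range_succ_eq_map]
  simp only [List.flatMap_cons, List.head?_append, hhd 0 (by omega)]
  rfl

lemma getLast?_flatMap_range (f : ℕ → List ℕ) (m : ℕ) (lst : ℕ → ℕ)
    (hlst : ∀ c < m, (f c).getLast? = some (lst c)) (hm : 0 < m) :
    ((List.range m).flatMap f).getLast? = some (lst (m - 1)) := by
  obtain ⟨m', rfl⟩ : ∃ m', m = m' + 1 := ⟨m - 1, by omega⟩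
  rw [List.range_succ, List.flatMap_append]
  have hne : f m' ≠ [] := by
    intro h
    have := hlst m' (by omega)
    rw [h] at this
    simp at this
  simp only [List.flatMap_cons, List.flatMap_nil, List.append_nil]
  rw [List.getLast?_append_of_ne_nil _ hne, hlst m' (by omega)]
  simp

lemma chain'_flatMap_range (f : ℕ → List ℕ) (m : ℕ) (hd lst : ℕ → ℕ)
    (hhd : ∀ c < m, (f c).head? = some (hd c))
    (hlst : ∀ c < m, (f c).getLast? = some (lst c))
    (h1 : ∀ c < m, List.Chain' R (f c))
    (h2 : ∀ c, c + 1 < m → R (lst c) (hd (c + 1))) :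
    List.Chain' R ((List.range m).flatMap f) := by
  induction m with
  | zero => exact List.isChain_nil
  | succ m ih =>
    rw [List.range_succ, List.flatMap_append]
    unfold List.Chain'
    rw [List.isChain_append]
    refine ⟨ih (fun c hc => hhd c (by omega)) (fun c hc => hlst c (by omega))
      (fun c hc => h1 c (by omega)) (fun c hc => h2 c (by omega)), ?_, ?_⟩
    · simp only [List.flatMap_cons, List.flatMap_nil, List.append_nil]
      exact h1 m (by omega)
    · intro x hx y hy
      rcases Nat.eq_zero_or_pos m with rfl | hm
      · simp at hx
      · rw [getLast?_flatMap_range f m lst (fun c hc => hlst c (by omega)) hm] at hx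
        simp only [List.flatMap_cons, List.flatMap_nil, List.append_nil] at hy
        rw [hhd m (by omega)] at hy
        simp at hx hy
        subst hx; subst hy
        have := h2 (m - 1) (by omega)
        rwa [Nat.sub_add_cancel (by omega)] at this

lemma head?_gC (σ c : ℕ) (hσ : 3 ≤ σ) : (gC σ c).head? = some (c * (2*σ+2)) := by
  rw [gC, List.head?_append,
    head?_flatMap_range (fun k => [c * (2*σ+2) + 2*k, k * (2*σ+2) + (2*c+1)]) (σ-1)
      (fun k => c * (2*σ+2) + 2*k) (fun k hk => rfl) (by omega)]
  simp

lemma getLast?_gC (σ c : ℕ) : (gC σ c).getLast? = some (c * (2*σ+2) + 2*σ) := by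
  rw [gC, List.getLast?_append_of_ne_nil _ (by simp)]
  rfl

lemma head?_gL (σ : ℕ) : (gL σ).head? = some (2*σ^2 - 1) := rfl

lemma getLast?_gL (σ : ℕ) : (gL σ).getLast? = some (2*σ^2 - 3) := by
  rw [gL, List.getLast?_append_of_ne_nil _ (by simp)]
  rfl

/-- index bound -/
lemma idx_lt (σ a r : ℕ) (hσ : 3 ≤ σ) (ha : a < σ - 1) (hr : r < 2*σ+2) :
    a * (2*σ+2) + r < 2*σ^2 - 2 := by
  have h2 : (a+1) * (2*σ+2) ≤ (σ-2) * (2*σ+2) + (2*σ+2) := by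
    have : a + 1 ≤ σ - 1 := by omega
    calc (a+1) * (2*σ+2) ≤ (σ-1) * (2*σ+2) := Nat.mul_le_mul_right _ this
      _ = (σ-2) * (2*σ+2) + (2*σ+2) := by
          obtain ⟨d, rfl⟩ : ∃ d, σ = 3 + d := ⟨σ - 3, by omega⟩
          have e1 : 3 + d - 1 = d + 2 := by omega
          have e2 : 3 + d - 2 = d + 1 := by omega
          rw [e1, e2]; ring
  have h3 : (a+1) * (2*σ+2) = a * (2*σ+2) + (2*σ+2) := by ring
  have h4 : (σ-2) * (2*σ+2) + (2*σ+2) ≤ 2*σ^2 - 2 := by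
    obtain ⟨d, rfl⟩ : ∃ d, σ = 3 + d := ⟨σ - 3, by omega⟩
    have e2 : 3 + d - 2 = d + 1 := by omega
    rw [e2]
    have e3 : (d+1) * (2*(3+d)+2) = 2*d^2 + 10*d + 8 := by ring
    have e4 : 2*(3+d)^2 = 2*d^2 + 12*d + 18 := by ring
    omega
  omega

/-- Sstr eval, even offset -/
lemma SgetE (σ a b i : ℕ) (hσ : 3 ≤ σ) (ha : a < σ - 1) (hb : b ≤ σ)
    (hi : i = a * (2*σ+2) + 2*b) :
    (Sstr σ).getD (i % (2*σ^2)) 0 = a := by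
  subst hi
  rw [Nat.mod_eq_of_lt (by have := idx_lt σ a (2*b) hσ ha (by omega); omega),
    Sval σ a (2*b) hσ ha (by omega)]
  simp [Nat.mul_mod_right]

/-- Sstr eval, odd offset 2b+1, b < σ -/
lemma SgetO (σ a b i : ℕ) (hσ : 3 ≤ σ) (ha : a < σ - 1) (hb : b < σ)
    (hi : i = a * (2*σ+2) + (2*b+1)) :
    (Sstr σ).getD (i % (2*σ^2)) 0 = b := by
  subst hi
  rw [Nat.mod_eq_of_lt (by have := idx_lt σ a (2*b+1) hσ ha (by omega); omega),
    Sval σ a (2*b+1) hσ ha (by omega)]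
  have h1 : (2*b+1) % 2 = 1 := by omega
  have h2 : (2*b+1) / 2 = b := by omega
  simp [h1, h2]
  omega

/-- Sstr eval, odd offset 2σ+1 -/
lemma SgetO2 (σ a i : ℕ) (hσ : 3 ≤ σ) (ha : a < σ - 1)
    (hi : i = a * (2*σ+2) + (2*σ+1)) :
    (Sstr σ).getD (i % (2*σ^2)) 0 = σ - 1 := by
  subst hi
  rw [Nat.mod_eq_of_lt (by have := idx_lt σ a (2*σ+1) hσ ha (by omega); omega),
    Sval σ a (2*σ+1) hσ ha (by omega)]
  have h1 : (2*σ+1) % 2 = 1 := by omega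
  have h2 : (2*σ+1) / 2 = σ := by omega
  simp [h1, h2]

lemma SgetN2 (σ i : ℕ) (hσ : 3 ≤ σ) (hi : i = 2*σ^2 - 2) :
    (Sstr σ).getD (i % (2*σ^2)) 0 = σ - 1 := by
  subst hi
  have h9 : 9 ≤ σ^2 := by nlinarith
  rw [Nat.mod_eq_of_lt (by omega)]
  exact (Sval_last σ hσ).1

lemma SgetN1 (σ i : ℕ) (hσ : 3 ≤ σ) (hi : i = 2*σ^2 - 1) :
    (Sstr σ).getD (i % (2*σ^2)) 0 = σ - 1 := by
  subst hi
  have h9 : 9 ≤ σ^2 := by nlinarith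
  rw [Nat.mod_eq_of_lt (by omega)]
  exact (Sval_last σ hσ).2

end part3


section part4
variable (σ : ℕ)

lemma Rlt (hσ : 3 ≤ σ) (i j t : ℕ) (hi : i < 2*σ^2) (hj : j < 2*σ^2) (ht : t < 2*σ^2)
    (heq : ∀ s, s < t →
      (Sstr σ).getD ((i + s) % (2*σ^2)) 0 = (Sstr σ).getD ((j + s) % (2*σ^2)) 0)
    (hlt : (Sstr σ).getD ((i + t) % (2*σ^2)) 0 < (Sstr σ).getD ((j + t) % (2*σ^2)) 0) :
    rot (Sstr σ) i < rot (Sstr σ) j := by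
  have hL := length_Sstr σ hσ
  rw [← hL] at hi hj ht heq hlt
  exact rot_lt_rot (Sstr σ) i j t (le_of_lt hi) (le_of_lt hj) ht heq hlt

lemma Sget0 (hσ : 3 ≤ σ) : (Sstr σ).getD 0 0 = 0 := by
  have := Sval σ 0 0 hσ (by omega) (by omega)
  simpa using this

lemma Sget1 (hσ : 3 ≤ σ) : (Sstr σ).getD 1 0 = 0 := by
  have := Sval σ 0 1 hσ (by omega) (by omega)
  simpa using this

lemma ib (hσ : 3 ≤ σ) (a r : ℕ) (ha : a < σ - 1) (hr : r < 2*σ+2) :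
    a * (2*σ+2) + r < 2*σ^2 := by
  have := idx_lt σ a r hσ ha hr
  omega

lemma cmp1 (hσ : 3 ≤ σ) (c k : ℕ) (hc : c < σ - 1) (hk : k < σ - 1) :
    rot (Sstr σ) (c * (2*σ+2) + 2*k) < rot (Sstr σ) (k * (2*σ+2) + (2*c+1)) := by
  have h9 : 9 ≤ σ^2 := by nlinarith
  apply Rlt σ hσ _ _ 2 (ib σ hσ c (2*k) hc (by omega)) (ib σ hσ k (2*c+1) hk (by omega))
    (by omega)
  · intro s hs
    have : s = 0 ∨ s = 1 := by omega
    rcases this with rfl | rfl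
    · rw [SgetE σ c k _ hσ hc (by omega) (by omega),
        SgetO σ k c _ hσ hk (by omega) (by omega)]
    · rw [SgetO σ c k _ hσ hc (by omega) (by omega),
        SgetE σ k (c+1) _ hσ hk (by omega) (by omega)]
  · rw [SgetE σ c (k+1) _ hσ hc (by omega) (by omega),
      SgetO σ k (c+1) _ hσ hk (by omega) (by omega)]
    omega

lemma cmp2 (hσ : 3 ≤ σ) (c k : ℕ) (hc : c < σ - 1) (hk : k ≤ σ - 2) :
    rot (Sstr σ) (k * (2*σ+2) + (2*c+1)) < rot (Sstr σ) (c * (2*σ+2) + 2*(k+1)) := by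
  have h9 : 9 ≤ σ^2 := by nlinarith
  apply Rlt σ hσ _ _ 1 (ib σ hσ k (2*c+1) (by omega) (by omega))
    (ib σ hσ c (2*(k+1)) hc (by omega)) (by omega)
  · intro s hs
    have : s = 0 := by omega
    subst this
    rw [SgetO σ k c _ hσ (by omega) (by omega) (by omega),
      SgetE σ c (k+1) _ hσ hc (by omega) (by omega)]
  · rw [SgetE σ k (c+1) _ hσ (by omega) (by omega) (by omega),
      SgetO σ c (k+1) _ hσ hc (by omega) (by omega)]
    omega

lemma cmp3 (hσ : 3 ≤ σ) (c : ℕ) (hc : c < σ - 1) :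
    rot (Sstr σ) (c * (2*σ+2) + (2*σ-2)) < rot (Sstr σ) (c * (2*σ+2) + 2*σ) := by
  have h9 : 9 ≤ σ^2 := by nlinarith
  apply Rlt σ hσ _ _ 2 (ib σ hσ c (2*σ-2) hc (by omega)) (ib σ hσ c (2*σ) hc (by omega))
    (by omega)
  · intro s hs
    have : s = 0 ∨ s = 1 := by omega
    rcases this with rfl | rfl
    · rw [SgetE σ c (σ-1) _ hσ hc (by omega) (by omega),
        SgetE σ c σ _ hσ hc (by omega) (by omega)]
    · rw [SgetO σ c (σ-1) _ hσ hc (by omega) (by omega),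
        SgetO2 σ c _ hσ hc (by omega)]
  · rw [SgetE σ c σ _ hσ hc (by omega) (by omega)]
    rcases Nat.lt_or_ge (c+1) (σ-1) with h | h
    · rw [SgetE σ (c+1) 0 _ hσ h (by omega)
        (by have : (c+1)*(2*σ+2) = c*(2*σ+2)+(2*σ+2) := by ring
            omega)]
      omega
    · have hc2 : c = σ - 2 := by omega
      rw [SgetN2 σ _ hσ ?_]
      · omega
      · subst hc2
        obtain ⟨d, rfl⟩ : ∃ d, σ = 3 + d := ⟨σ - 3, by omega⟩
        have e2 : 3 + d - 2 = d + 1 := by omega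
        rw [e2]
        have e3 : (d+1) * (2*(3+d)+2) = 2*d^2 + 10*d + 8 := by ring
        have e4 : 2*(3+d)^2 = 2*d^2 + 12*d + 18 := by ring
        omega

lemma cmp4 (hσ : 3 ≤ σ) (c : ℕ) (hc : c + 1 < σ - 1) :
    rot (Sstr σ) (c * (2*σ+2) + 2*σ) < rot (Sstr σ) ((c+1) * (2*σ+2)) := by
  have h9 : 9 ≤ σ^2 := by nlinarith
  apply Rlt σ hσ _ _ 0 (ib σ hσ c (2*σ) (by omega) (by omega))
    (ib σ hσ (c+1) 0 hc (by omega)) (by omega)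
  · intro s hs; omega
  · rw [SgetE σ c σ _ hσ (by omega) (by omega) (by omega),
      SgetE σ (c+1) 0 _ hσ hc (by omega) (by ring)]
    omega

lemma cmp5 (hσ : 3 ≤ σ) :
    rot (Sstr σ) ((σ-2) * (2*σ+2) + 2*σ) < rot (Sstr σ) (2*σ^2 - 1) := by
  have h9 : 9 ≤ σ^2 := by nlinarith
  apply Rlt σ hσ _ _ 0 (ib σ hσ (σ-2) (2*σ) (by omega) (by omega)) (by omega) (by omega)
  · intro s hs; omega
  · rw [SgetE σ (σ-2) σ _ hσ (by omega) (by omega) (by omega), SgetN1 σ _ hσ (by omega)]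
    omega

lemma modself (hσ : 3 ≤ σ) : (2*σ^2 - 1 + 1) % (2*σ^2) = 0 := by
  have h9 : 9 ≤ σ^2 := by nlinarith
  have : 2*σ^2 - 1 + 1 = 2*σ^2 := by omega
  rw [this, Nat.mod_self]

lemma modone (hσ : 3 ≤ σ) : (2*σ^2 - 1 + 2) % (2*σ^2) = 1 := by
  have h9 : 9 ≤ σ^2 := by nlinarith
  have : 2*σ^2 - 1 + 2 = 1 + 2*σ^2 := by omega
  rw [this, Nat.add_mod_right, Nat.mod_eq_of_lt (by omega)]

lemma modzero2 (hσ : 3 ≤ σ) : (2*σ^2 - 2 + 2) % (2*σ^2) = 0 := by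
  have h9 : 9 ≤ σ^2 := by nlinarith
  have : 2*σ^2 - 2 + 2 = 2*σ^2 := by omega
  rw [this, Nat.mod_self]

lemma cmpL1 (hσ : 3 ≤ σ) :
    rot (Sstr σ) (2*σ^2 - 1) < rot (Sstr σ) (2*σ-1) := by
  have h9 : 9 ≤ σ^2 := by nlinarith
  have hss : 2*σ+2 ≤ σ^2 := by nlinarith
  apply Rlt σ hσ _ _ 2 (by omega) (by omega) (by omega)
  · intro s hs
    have : s = 0 ∨ s = 1 := by omega
    rcases this with rfl | rfl
    · rw [SgetN1 σ _ hσ (by omega), SgetO σ 0 (σ-1) _ hσ (by omega) (by omega) (by omega)]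
    · rw [modself σ hσ, Sget0 σ hσ, SgetE σ 0 σ _ hσ (by omega) (by omega) (by omega)]
  · rw [modone σ hσ, Sget1 σ hσ, SgetO2 σ 0 _ hσ (by omega) (by omega)]
    omega

lemma cmpL2 (hσ : 3 ≤ σ) (a : ℕ) (ha : a < σ - 2) :
    rot (Sstr σ) (a * (2*σ+2) + (2*σ-1)) < rot (Sstr σ) (a * (2*σ+2) + (2*σ+1)) := by
  have h9 : 9 ≤ σ^2 := by nlinarith
  apply Rlt σ hσ _ _ 1 (ib σ hσ a (2*σ-1) (by omega) (by omega))
    (ib σ hσ a (2*σ+1) (by omega) (by omega)) (by omega)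
  · intro s hs
    have : s = 0 := by omega
    subst this
    rw [SgetO σ a (σ-1) _ hσ (by omega) (by omega) (by omega),
      SgetO2 σ a _ hσ (by omega) (by omega)]
  · rw [SgetE σ a σ _ hσ (by omega) (by omega) (by omega),
      SgetE σ (a+1) 0 _ hσ (by omega) (by omega)
        (by have : (a+1)*(2*σ+2) = a*(2*σ+2)+(2*σ+2) := by ring
            omega)]
    omega

lemma cmpL3 (hσ : 3 ≤ σ) (a : ℕ) (ha : a + 1 ≤ σ - 2) :
    rot (Sstr σ) (a * (2*σ+2) + (2*σ+1)) < rot (Sstr σ) ((a+1) * (2*σ+2) + (2*σ-1)) := by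
  have h9 : 9 ≤ σ^2 := by nlinarith
  have hr : (a+1)*(2*σ+2) = a*(2*σ+2)+(2*σ+2) := by ring
  apply Rlt σ hσ _ _ 2 (ib σ hσ a (2*σ+1) (by omega) (by omega))
    (ib σ hσ (a+1) (2*σ-1) (by omega) (by omega)) (by omega)
  · intro s hs
    have : s = 0 ∨ s = 1 := by omega
    rcases this with rfl | rfl
    · rw [SgetO2 σ a _ hσ (by omega) (by omega),
        SgetO σ (a+1) (σ-1) _ hσ (by omega) (by omega) (by omega)]
    · rw [SgetE σ (a+1) 0 _ hσ (by omega) (by omega) (by omega),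
        SgetE σ (a+1) σ _ hσ (by omega) (by omega) (by omega)]
  · rw [SgetO σ (a+1) 0 _ hσ (by omega) (by omega) (by omega),
      SgetO2 σ (a+1) _ hσ (by omega) (by omega)]
    omega

lemma narith (hσ : 3 ≤ σ) :
    (σ-2) * (2*σ+2) + (2*σ-1) = 2*σ^2 - 5 ∧ (σ-2) * (2*σ+2) + (2*σ+1) = 2*σ^2 - 3 ∧
    (σ-2) * (2*σ+2) + 2*σ = 2*σ^2 - 4 := by
  obtain ⟨d, rfl⟩ : ∃ d, σ = 3 + d := ⟨σ - 3, by omega⟩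
  have e2 : 3 + d - 2 = d + 1 := by omega
  rw [e2]
  have e3 : (d+1) * (2*(3+d)+2) = 2*d^2 + 10*d + 8 := by ring
  have e4 : 2*(3+d)^2 = 2*d^2 + 12*d + 18 := by ring
  omega

lemma cmpL4 (hσ : 3 ≤ σ) :
    rot (Sstr σ) (2*σ^2 - 5) < rot (Sstr σ) (2*σ^2 - 2) := by
  have h9 : 9 ≤ σ^2 := by nlinarith
  obtain ⟨e1, e2, e3⟩ := narith σ hσ
  apply Rlt σ hσ _ _ 1 (by omega) (by omega) (by omega)
  · intro s hs
    have : s = 0 := by omega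
    subst this
    rw [SgetO σ (σ-2) (σ-1) _ hσ (by omega) (by omega) (by omega),
      SgetN2 σ _ hσ (by omega)]
  · rw [SgetE σ (σ-2) σ _ hσ (by omega) (by omega) (by omega), SgetN1 σ _ hσ (by omega)]
    omega

lemma cmpL5 (hσ : 3 ≤ σ) :
    rot (Sstr σ) (2*σ^2 - 2) < rot (Sstr σ) (2*σ^2 - 3) := by
  have h9 : 9 ≤ σ^2 := by nlinarith
  obtain ⟨e1, e2, e3⟩ := narith σ hσ
  apply Rlt σ hσ _ _ 2 (by omega) (by omega) (by omega)
  · intro s hs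
    have : s = 0 ∨ s = 1 := by omega
    rcases this with rfl | rfl
    · rw [SgetN2 σ _ hσ (by omega), SgetO2 σ (σ-2) _ hσ (by omega) (by omega)]
    · rw [SgetN1 σ _ hσ (by omega), SgetN2 σ _ hσ (by omega)]
  · rw [modzero2 σ hσ, Sget0 σ hσ, SgetN1 σ _ hσ (by omega)]
    omega

/-- the full chain -/
lemma chain_sIdx (hσ : 3 ≤ σ) :
    List.Chain' (fun i j => rot (Sstr σ) i < rot (Sstr σ) j) (sIdx σ) := by
  have h9 : 9 ≤ σ^2 := by nlinarith
  set R : ℕ → ℕ → Prop := fun i j => rot (Sstr σ) i < rot (Sstr σ) j with hR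
  unfold List.Chain'
  rw [sIdx, List.isChain_append]
  refine ⟨?_, ?_, ?_⟩
  · -- chain over the gC groups
    apply chain'_flatMap_range (fun c => gC σ c) (σ-1) (fun c => c * (2*σ+2))
      (fun c => c * (2*σ+2) + 2*σ)
    · intro c hc; exact head?_gC σ c hσ
    · intro c hc; exact getLast?_gC σ c
    · intro c hc
      unfold List.Chain'
      rw [gC, List.isChain_append]
      refine ⟨?_, ?_, ?_⟩
      · apply chain'_flatMap_range (fun k => [c * (2*σ+2) + 2*k, k * (2*σ+2) + (2*c+1)]) (σ-1) (fun k => c * (2*σ+2) + 2*k)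
          (fun k => k * (2*σ+2) + (2*c+1)) (fun k hk => rfl) (fun k hk => rfl)
        · intro k hk
          unfold List.Chain'
          rw [List.isChain_pair]
          exact cmp1 σ hσ c k hc hk
        · intro k hk
          exact cmp2 σ hσ c k hc (by omega)
      · rw [List.isChain_pair]
        exact cmp3 σ hσ c hc
      · intro x hx y hy
        rw [getLast?_flatMap_range (fun k => [c * (2*σ+2) + 2*k, k * (2*σ+2) + (2*c+1)]) (σ-1) (fun k => k * (2*σ+2) + (2*c+1))
          (fun k hk => rfl) (by omega)] at hx
        simp at hx hy
        subst hx; subst hy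
        have h := cmp2 σ hσ c (σ-1-1) hc (by omega)
        have e : 2*(σ-1-1+1) = 2*σ-2 := by omega
        rw [e] at h
        exact h
    · intro c hc
      exact cmp4 σ hσ c (by omega)
  · -- chain within gL
    rw [gL, List.isChain_append]
    refine ⟨?_, ?_, ?_⟩
    · rw [List.isChain_append]
      refine ⟨by simp, ?_, ?_⟩
      · apply chain'_flatMap_range (fun a => [a * (2*σ+2) + (2*σ-1), a * (2*σ+2) + (2*σ+1)]) (σ-2) (fun a => a * (2*σ+2) + (2*σ-1))
          (fun a => a * (2*σ+2) + (2*σ+1)) (fun a ha => rfl) (fun a ha => rfl)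
        · intro a ha
          unfold List.Chain'
          rw [List.isChain_pair]
          exact cmpL2 σ hσ a ha
        · intro a ha
          exact cmpL3 σ hσ a (by omega)
      · intro x hx y hy
        simp at hx
        rw [head?_flatMap_range (fun a => [a * (2*σ+2) + (2*σ-1), a * (2*σ+2) + (2*σ+1)]) (σ-2) (fun a => a * (2*σ+2) + (2*σ-1))
          (fun a ha => rfl) (by omega)] at hy
        simp at hy
        subst hx; subst hy
        exact cmpL1 σ hσ
    · rw [List.isChain_cons_cons, List.isChain_cons_cons]
      exact ⟨cmpL4 σ hσ, cmpL5 σ hσ, List.isChain_singleton _⟩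
    · intro x hx y hy
      rw [List.getLast?_append, getLast?_flatMap_range (fun a => [a * (2*σ+2) + (2*σ-1), a * (2*σ+2) + (2*σ+1)]) (σ-2)
        (fun a => a * (2*σ+2) + (2*σ+1)) (fun a ha => rfl) (by omega)] at hx
      simp at hx hy
      subst hx; subst hy
      have h := cmpL3 σ hσ (σ-2-1) (by omega)
      have e : σ-2-1+1 = σ-2 := by omega
      rw [e] at h
      obtain ⟨e1, e2, e3⟩ := narith σ hσ
      rw [← e1]
      exact h
  · -- boundary: last gC to head gL
    intro x hx y hy
    rw [getLast?_flatMap_range (fun c => gC σ c) (σ-1) (fun c => c * (2*σ+2) + 2*σ)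
      (fun c hc => getLast?_gC σ c) (by omega)] at hx
    rw [head?_gL] at hy
    simp at hx hy
    subst hx; subst hy
    have h := cmp5 σ hσ
    have e : σ-1-1 = σ-2 := by omega
    rw [e]
    exact h


section part5
variable (σ : ℕ)

lemma SgetE' (a b i : ℕ) (hσ : 3 ≤ σ) (ha : a < σ - 1) (hb : b ≤ σ)
    (hi : i = a * (2*σ+2) + 2*b) : (Sstr σ).getD i 0 = a := by
  subst hi
  have h := SgetE σ a b _ hσ ha hb rfl
  rwa [Nat.mod_eq_of_lt (ib σ hσ a (2*b) ha (by omega))] at h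

lemma SgetO' (a b i : ℕ) (hσ : 3 ≤ σ) (ha : a < σ - 1) (hb : b < σ)
    (hi : i = a * (2*σ+2) + (2*b+1)) : (Sstr σ).getD i 0 = b := by
  subst hi
  have h := SgetO σ a b _ hσ ha hb rfl
  rwa [Nat.mod_eq_of_lt (ib σ hσ a (2*b+1) ha (by omega))] at h

lemma SgetO2' (a i : ℕ) (hσ : 3 ≤ σ) (ha : a < σ - 1)
    (hi : i = a * (2*σ+2) + (2*σ+1)) : (Sstr σ).getD i 0 = σ - 1 := by
  subst hi
  have h := SgetO2 σ a _ hσ ha rfl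
  rwa [Nat.mod_eq_of_lt (ib σ hσ a (2*σ+1) ha (by omega))] at h

def pprev (σ i : ℕ) : ℕ := (Sstr σ).getD ((i + (2*σ^2 - 1)) % (2*σ^2)) 0

lemma pprev_pos (hσ : 3 ≤ σ) (i : ℕ) (h1 : 1 ≤ i) (h2 : i < 2*σ^2) :
    pprev σ i = (Sstr σ).getD (i - 1) 0 := by
  rw [pprev]
  have h9 : 9 ≤ σ^2 := by nlinarith
  have e : i + (2*σ^2 - 1) = (i - 1) + 2*σ^2 := by omega
  rw [e, Nat.add_mod_right, Nat.mod_eq_of_lt (by omega)]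

lemma pprev_zero (hσ : 3 ≤ σ) : pprev σ 0 = σ - 1 := by
  rw [pprev]
  have h9 : 9 ≤ σ^2 := by nlinarith
  rw [Nat.zero_add, Nat.mod_eq_of_lt (by omega)]
  exact (Sval_last σ hσ).2

/-- output of a regular group -/
def gOut (σ : ℕ) : List ℕ :=
  ((List.range (σ - 1)).flatMap fun k => [if k = 0 then σ - 1 else k - 1, k]) ++ [σ - 2, σ - 1]

lemma mapPrev_gC (hσ : 3 ≤ σ) (c : ℕ) (hc : c < σ - 1) :
    (gC σ c).map (pprev σ) = gOut σ := by
  have h9 : 9 ≤ σ^2 := by nlinarith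
  rw [gC, gOut, List.map_append, List.map_flatMap]
  congr 1
  · apply List.flatMap_congr
    intro k hk
    rw [List.mem_range] at hk
    simp only [List.map_cons, List.map_nil]
    have hv1 : pprev σ (c * (2*σ+2) + 2*k) = if k = 0 then σ - 1 else k - 1 := by
      rcases Nat.eq_zero_or_pos k with rfl | hk1
      · rw [if_pos rfl]
        rcases Nat.eq_zero_or_pos c with rfl | hc1
        · have e : 0 * (2*σ+2) + 2*0 = 0 := by omega
          rw [e, pprev_zero σ hσ]
        · obtain ⟨c', rfl⟩ : ∃ c', c = c' + 1 := ⟨c - 1, by omega⟩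
          have hee : (c'+1)*(2*σ+2) = c'*(2*σ+2)+(2*σ+2) := by ring
          rw [pprev_pos σ hσ _ (by omega) (ib σ hσ (c'+1) (2*0) hc (by omega))]
          exact SgetO2' σ c' _ hσ (by omega) (by omega)
      · rw [if_neg (by omega),
          pprev_pos σ hσ _ (by omega) (ib σ hσ c (2*k) hc (by omega))]
        exact SgetO' σ c (k-1) _ hσ hc (by omega) (by omega)
    have hv2 : pprev σ (k * (2*σ+2) + (2*c+1)) = k := by
      rw [pprev_pos σ hσ _ (by omega) (ib σ hσ k (2*c+1) hk (by omega))]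
      exact SgetE' σ k c _ hσ hk (by omega) (by omega)
    rw [hv1, hv2]
  · -- tail
    have t1 : pprev σ (c * (2*σ+2) + (2*σ-2)) = σ - 2 := by
      rw [pprev_pos σ hσ _ (by omega) (ib σ hσ c (2*σ-2) hc (by omega))]
      exact SgetO' σ c (σ-2) _ hσ hc (by omega) (by omega)
    have t2 : pprev σ (c * (2*σ+2) + 2*σ) = σ - 1 := by
      rw [pprev_pos σ hσ _ (by omega) (ib σ hσ c (2*σ) hc (by omega))]
      exact SgetO' σ c (σ-1) _ hσ hc (by omega) (by omega)
    simp [t1, t2]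

lemma mapPrev_gL (hσ : 3 ≤ σ) :
    (gL σ).map (pprev σ) =
      [σ - 1] ++ ((List.range (σ - 2)).flatMap fun a => [a, a]) ++ [σ-2, σ-1, σ-2] := by
  have h9 : 9 ≤ σ^2 := by nlinarith
  obtain ⟨e1, e2, e3⟩ := narith σ hσ
  rw [gL, List.map_append, List.map_append, List.map_flatMap]
  congr 1
  congr 1
  · simp only [List.map_cons, List.map_nil]
    rw [pprev_pos σ hσ _ (by omega) (by omega)]
    have : 2*σ^2 - 1 - 1 = 2*σ^2 - 2 := by omega
    rw [this]
    exact congrArg (fun x => [x]) (Sval_last σ hσ).1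
  · apply List.flatMap_congr
    intro a ha
    rw [List.mem_range] at ha
    simp only [List.map_cons, List.map_nil]
    have t1 : pprev σ (a * (2*σ+2) + (2*σ-1)) = a := by
      rw [pprev_pos σ hσ _ (by omega) (ib σ hσ a (2*σ-1) (by omega) (by omega))]
      exact SgetE' σ a (σ-1) _ hσ (by omega) (by omega) (by omega)
    have t2 : pprev σ (a * (2*σ+2) + (2*σ+1)) = a := by
      rw [pprev_pos σ hσ _ (by omega) (ib σ hσ a (2*σ+1) (by omega) (by omega))]
      exact SgetE' σ a σ _ hσ (by omega) (by omega) (by omega)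
    rw [t1, t2]
  · have t1 : pprev σ (2*σ^2 - 5) = σ - 2 := by
      rw [pprev_pos σ hσ _ (by omega) (by omega)]
      exact SgetE' σ (σ-2) (σ-1) _ hσ (by omega) (by omega) (by omega)
    have t2 : pprev σ (2*σ^2 - 2) = σ - 1 := by
      rw [pprev_pos σ hσ _ (by omega) (by omega)]
      exact SgetO2' σ (σ-2) _ hσ (by omega) (by omega)
    have t3 : pprev σ (2*σ^2 - 3) = σ - 2 := by
      rw [pprev_pos σ hσ _ (by omega) (by omega)]
      exact SgetE' σ (σ-2) σ _ hσ (by omega) (by omega) (by omega)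
    simp [t1, t2, t3]

end part5



section part6
variable (σ : ℕ)

lemma length_gC (hσ : 3 ≤ σ) (c : ℕ) : (gC σ c).length = 2*σ := by
  rw [gC, List.length_append,
    length_flatMap_range (fun k => [c * (2*σ+2) + 2*k, k * (2*σ+2) + (2*c+1)]) 2 (σ-1)
      (fun i => rfl)]
  simp; omega

lemma length_gL (hσ : 3 ≤ σ) : (gL σ).length = 2*σ := by
  rw [gL, List.length_append, List.length_append,
    length_flatMap_range (fun a => [a * (2*σ+2) + (2*σ-1), a * (2*σ+2) + (2*σ+1)]) 2 (σ-2)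
      (fun i => rfl)]
  simp; omega

lemma length_sIdx (hσ : 3 ≤ σ) : (sIdx σ).length = 2*σ^2 := by
  rw [sIdx, List.length_append,
    length_flatMap_range (fun c => gC σ c) (2*σ) (σ-1) (fun i => length_gC σ hσ i),
    length_gL σ hσ]
  obtain ⟨d, rfl⟩ : ∃ d, σ = 3 + d := ⟨σ - 3, by omega⟩
  have e1 : 3 + d - 1 = d + 2 := by omega
  rw [e1]
  have e2 : (d+2) * (2*(3+d)) = 2*d^2 + 10*d + 12 := by ring
  have e3 : 2*(3+d)^2 = 2*d^2 + 12*d + 18 := by ring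
  omega

lemma mem_sIdx_lt (hσ : 3 ≤ σ) (x : ℕ) (hx : x ∈ sIdx σ) : x < 2*σ^2 := by
  have h9 : 9 ≤ σ^2 := by nlinarith
  have hss : 2*σ+2 ≤ σ^2 := by nlinarith
  simp only [sIdx, gC, gL, List.mem_append, List.mem_flatMap, List.mem_range,
    List.mem_cons, List.not_mem_nil, or_false, List.mem_singleton] at hx
  rcases hx with ⟨c, hc, (⟨k, hk, (rfl | rfl)⟩ | (rfl | rfl))⟩ |
      (rfl | ⟨a, ha, (rfl | rfl)⟩) | rfl | rfl | rfl
  · exact ib σ hσ c (2*k) hc (by omega)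
  · exact ib σ hσ k (2*c+1) hk (by omega)
  · exact ib σ hσ c (2*σ-2) hc (by omega)
  · exact ib σ hσ c (2*σ) hc (by omega)
  · omega
  · exact ib σ hσ a (2*σ-1) (by omega) (by omega)
  · exact ib σ hσ a (2*σ+1) (by omega) (by omega)
  · omega
  · omega
  · omega

lemma perm_sIdx (hσ : 3 ≤ σ) : (sIdx σ).Perm (List.range (2*σ^2)) := by
  have hchain := chain_sIdx σ hσ
  haveI : IsTrans ℕ (fun i j => rot (Sstr σ) i < rot (Sstr σ) j) :=
    ⟨fun a b c h1 h2 => lt_trans h1 h2⟩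
  have hpair : List.Pairwise (fun i j => rot (Sstr σ) i < rot (Sstr σ) j) (sIdx σ) :=
    List.isChain_iff_pairwise.mp hchain
  have hmapPair : List.Pairwise (· < ·) ((sIdx σ).map fun i => rot (Sstr σ) i) :=
    List.pairwise_map.mpr hpair
  have hnodupmap : ((sIdx σ).map fun i => rot (Sstr σ) i).Nodup :=
    hmapPair.imp ne_of_lt
  have hnodup : (sIdx σ).Nodup := List.Nodup.of_map _ hnodupmap
  have hsub : sIdx σ ⊆ List.range (2*σ^2) :=
    fun x hx => List.mem_range.mpr (mem_sIdx_lt σ hσ x hx)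
  exact (List.subperm_of_subset hnodup hsub).perm_of_length_le
    (by rw [List.length_range, length_sIdx σ hσ])

lemma sorted_sIdx (hσ : 3 ≤ σ) :
    List.Pairwise (· ≤ ·) ((sIdx σ).map fun i => rot (Sstr σ) i) := by
  have hchain := chain_sIdx σ hσ
  haveI : IsTrans ℕ (fun i j => rot (Sstr σ) i < rot (Sstr σ) j) :=
    ⟨fun a b c h1 h2 => lt_trans h1 h2⟩
  have hpair : List.Pairwise (fun i j => rot (Sstr σ) i < rot (Sstr σ) j) (sIdx σ) :=
    List.isChain_iff_pairwise.mp hchain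
  exact (List.pairwise_map.mpr hpair).imp le_of_lt

/-! list algebra -/

lemma flatMap_const (m : ℕ) (G : List ℕ) :
    (List.range m).flatMap (fun _ => G) = (List.replicate m G).flatten := by
  induction m with
  | zero => simp
  | succ m ih =>
    rw [List.range_succ, List.flatMap_append, ih, List.replicate_succ',
      List.flatten_append]
    simp

lemma shift1 (X m : ℕ) :
    (List.range (m+1)).flatMap (fun k => [if k = 0 then X else k - 1, k]) =
      (X :: ((List.range m).flatMap fun k => [k, k])) ++ [m] := by
  induction m with
  | zero => simp [List.range_succ]
  | succ m ih =>
    rw [List.range_succ, List.flatMap_append, ih]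
    rw [show List.range (m+1) = List.range m ++ [m] from List.range_succ (n := m),
      List.flatMap_append]
    simp

lemma flattenrep_shift (p X : ℕ) (B : List ℕ) :
    (List.replicate p (X :: B)).flatten ++ [X] =
      X :: (List.replicate p (B ++ [X])).flatten := by
  induction p with
  | zero => simp
  | succ p ih =>
    rw [List.replicate_succ, List.replicate_succ, List.flatten_cons, List.flatten_cons]
    simp only [List.cons_append, List.append_assoc, ih]
    simp

lemma gOut_eq (hσ : 3 ≤ σ) :
    gOut σ = (σ - 1) :: ((((List.range (σ - 1)).flatMap fun k => [k, k]) ++ [σ - 1])) := by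
  obtain ⟨m, hm⟩ : ∃ m, σ - 1 = m + 1 := ⟨σ - 2, by omega⟩
  have hm2 : m = σ - 2 := by omega
  rw [gOut, hm, shift1, hm2]
  rw [show List.range (σ-2+1) = List.range (σ-2) ++ [σ-2] from List.range_succ (n := σ-2),
    List.flatMap_append]
  simp

lemma patBlock_eq (hσ : 3 ≤ σ) :
    patBlock σ = (((List.range (σ - 1)).flatMap fun k => [k, k]) ++ [σ - 1]) ++ [σ - 1] := by
  obtain ⟨m, hm⟩ : ∃ m, σ = m + 1 := ⟨σ - 1, by omega⟩
  have hm2 : m = σ - 1 := by omega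
  rw [patBlock, hm, List.range_succ, List.flatMap_append, hm2]
  simp

end part6

/-- for σ ≥ 3 the cyclic BWT of S_σ equals
(σ-1)·(0011⋯(σ-1)(σ-1))^{σ-1}·0011⋯(σ-3)(σ-3)(σ-2)(σ-1)(σ-2). -/
theorem stmt8 (σ : ℕ) (hσ : 3 ≤ σ) :
    cBWT (Sstr σ) = pattern σ (σ - 1) := by
  have h9 : 9 ≤ σ^2 := by nlinarith
  rw [cBWT, length_Sstr σ hσ]
  have hperm := perm_sIdx σ hσ
  have kk : ((List.range (2*σ^2)).map fun i => rot (Sstr σ) i).insertionSort (· ≤ ·) =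
      (sIdx σ).map fun i => rot (Sstr σ) i := by
    exact List.Perm.eq_of_pairwise'
      (List.pairwise_insertionSort _ _) (sorted_sIdx σ hσ)
      ((List.perm_insertionSort _ _).trans ((hperm.map fun i => rot (Sstr σ) i).symm))
  rw [kk, List.map_map]
  have step : ((sIdx σ).map ((fun ρ => ρ.getD (2*σ^2 - 1) 0) ∘ fun i => rot (Sstr σ) i)) =
      (sIdx σ).map (pprev σ) := by
    apply List.map_congr_left
    intro i hi
    have hi' : i < 2*σ^2 := mem_sIdx_lt σ hσ i hi
    show (rot (Sstr σ) i).getD (2*σ^2 - 1) 0 = pprev σ i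
    have h := rot_getD (Sstr σ) i (2*σ^2 - 1) (by rw [length_Sstr σ hσ]; omega)
      (by rw [length_Sstr σ hσ]; omega)
    rw [length_Sstr σ hσ] at h
    rw [h, pprev]
  rw [step, sIdx, List.map_append, List.map_flatMap, mapPrev_gL σ hσ]
  rw [List.flatMap_congr (fun c hc => by
    rw [mapPrev_gC σ hσ c (List.mem_range.mp hc), gOut_eq σ hσ])]
  rw [flatMap_const, pattern, patFinal, patBlock_eq σ hσ]
  have hs := flattenrep_shift (σ-1) (σ-1)
    (((List.range (σ - 1)).flatMap fun k => [k, k]) ++ [σ - 1])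
  simp only [← List.append_assoc]
  rw [hs]
  simp [List.append_assoc]
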